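/- (Sen's non-commutative union bound) Let ρ be a positive semidefinite operator with Tr[ρ] ≤ 1, and let Π₁, …, Π_k be orthogonal projectors with complements Π_i' = I − Π_i. Then Tr[Π_k Π_{k−1} ⋯ Π₁ ρ Π₁† ⋯ Π_{k−1}† Π_k†] ≥ Tr[ρ] − 2·√(Σ_{i=1}^k Tr[Π_i' ρ]). -/

import Mathlib

open Matrix BigOperators ComplexOrder

set_option linter.unusedSectionVars false

namespace SenAux

variable {n : Type*} [Fintype n] [DecidableEq n]

/-- Embed matrices into Euclidean space (Frobenius inner product). -/
noncomputable def e (X : Matrix n n ℂ) : EuclideanSpace ℂ (n × n) :=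
  (WithLp.equiv 2 _).symm (fun p => X p.1 p.2)

lemma e_sub (X Y : Matrix n n ℂ) : e (X - Y) = e X - e Y := rfl

lemma e_add (X Y : Matrix n n ℂ) : e (X + Y) = e X + e Y := rfl

lemma inner_e (X Y : Matrix n n ℂ) : (inner ℂ (e X) (e Y) : ℂ) = (Xᴴ * Y).trace := by
  rw [PiLp.inner_apply]
  simp only [e, WithLp.equiv_symm_apply, PiLp.toLp_apply, RCLike.inner_apply,
    Matrix.trace, Matrix.diag, Matrix.mul_apply, Matrix.conjTranspose_apply]
  rw [Fintype.sum_prod_type, Finset.sum_comm]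
  exact Finset.sum_congr rfl fun _ _ => Finset.sum_congr rfl fun _ _ => mul_comm _ _

lemma nsq (X : Matrix n n ℂ) : ‖e X‖ ^ 2 = ((Xᴴ * X).trace).re := by
  rw [← inner_self_eq_norm_sq (𝕜 := ℂ), inner_e]
  rfl

/-- Pythagoras for a hermitian idempotent. -/
lemma pyth (Q : Matrix n n ℂ) (hq : Qᴴ = Q) (hq2 : Q * Q = Q) (X : Matrix n n ℂ) :
    ‖e X‖ ^ 2 = ‖e (Q * X)‖ ^ 2 + ‖e ((1 - Q) * X)‖ ^ 2 := by
  have key : (Q * X)ᴴ * (Q * X) + ((1 - Q) * X)ᴴ * ((1 - Q) * X) = Xᴴ * X := by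
    simp only [Matrix.conjTranspose_mul, Matrix.conjTranspose_sub, Matrix.conjTranspose_one, hq]
    have e1 : Xᴴ * Q * (Q * X) = Xᴴ * (Q * X) := by
      rw [mul_assoc, ← mul_assoc Q Q X, hq2]
    have h2 : (1 - Q) * (1 - Q) = 1 - Q := by
      simp [sub_mul, mul_sub, hq2]
    have e2 : Xᴴ * (1 - Q) * ((1 - Q) * X) = Xᴴ * ((1 - Q) * X) := by
      rw [mul_assoc, ← mul_assoc (1 - Q) (1 - Q) X, h2]
    rw [e1, e2, ← mul_add]
    congr 1
    rw [sub_mul, one_mul]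
    abel
  rw [nsq, nsq, nsq, ← Complex.add_re, ← Matrix.trace_add, key]

lemma contract_sq (Q : Matrix n n ℂ) (hq : Qᴴ = Q) (hq2 : Q * Q = Q) (X : Matrix n n ℂ) :
    ‖e (Q * X)‖ ^ 2 ≤ ‖e X‖ ^ 2 := by
  rw [pyth Q hq hq2 X]
  nlinarith [sq_nonneg ‖e ((1 - Q) * X)‖]

lemma contract (Q : Matrix n n ℂ) (hq : Qᴴ = Q) (hq2 : Q * Q = Q) (X : Matrix n n ℂ) :
    ‖e (Q * X)‖ ≤ ‖e X‖ := by
  have := contract_sq Q hq hq2 X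
  nlinarith [norm_nonneg (e (Q * X)), norm_nonneg (e X)]

/-- Orthogonality of the two pieces in the hybrid decomposition. -/
lemma orth (Q : Matrix n n ℂ) (hq : Qᴴ = Q) (hq2 : Q * Q = Q) (C D : Matrix n n ℂ) :
    ‖e ((1 - Q) * C + Q * D)‖ ^ 2 = ‖e ((1 - Q) * C)‖ ^ 2 + ‖e (Q * D)‖ ^ 2 := by
  rw [e_add, norm_add_sq (𝕜 := ℂ)]
  have hz : (inner ℂ (e ((1 - Q) * C)) (e (Q * D)) : ℂ) = 0 := by
    rw [inner_e]
    have : ((1 - Q) * C)ᴴ * (Q * D) = 0 := by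
      simp only [Matrix.conjTranspose_mul, Matrix.conjTranspose_sub, Matrix.conjTranspose_one, hq]
      have h0 : (1 - Q) * (Q * D) = 0 := by
        rw [← mul_assoc, sub_mul, one_mul, hq2, sub_self, Matrix.zero_mul]
      rw [mul_assoc, h0, Matrix.mul_zero]
    rw [this, Matrix.trace_zero]
  rw [hz]
  simp

lemma prod_contract (L : List (Matrix n n ℂ))
    (hL : ∀ Q ∈ L, Qᴴ = Q ∧ Q * Q = Q) (X : Matrix n n ℂ) :
    ‖e (L.prod * X)‖ ≤ ‖e X‖ := by
  induction L with
  | nil => simp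
  | cons Q L ih =>
      have hQ := hL Q (List.mem_cons_self)
      rw [List.prod_cons, mul_assoc]
      exact (contract Q hQ.1 hQ.2 _).trans
        (ih fun R hR => hL R (List.mem_cons_of_mem _ hR))

lemma sen_key (L : List (Matrix n n ℂ))
    (hL : ∀ Q ∈ L, Qᴴ = Q ∧ Q * Q = Q) (S : Matrix n n ℂ) :
    ‖e (S - L.prod * S)‖ ^ 2 ≤ (L.map (fun Q => ‖e ((1 - Q) * S)‖ ^ 2)).sum := by
  induction L with
  | nil =>
      simp only [List.prod_nil, one_mul, sub_self, List.map_nil, List.sum_nil]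
      have : e (0 : Matrix n n ℂ) = 0 := rfl
      rw [this]
      simp
  | cons Q L ih =>
      have hQ := hL Q (List.mem_cons_self)
      have hL' : ∀ R ∈ L, Rᴴ = R ∧ R * R = R := fun R hR => hL R (List.mem_cons_of_mem _ hR)
      have hdec : S - (Q :: L).prod * S = (1 - Q) * S + Q * (S - L.prod * S) := by
        rw [List.prod_cons, mul_assoc, sub_mul, one_mul, mul_sub]
        abel
      rw [hdec, orth Q hQ.1 hQ.2, List.map_cons, List.sum_cons]
      have := contract_sq Q hQ.1 hQ.2 (S - L.prod * S)
      have h2 := ih hL'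
      linarith

end SenAux

open SenAux in
/-- Sen's non-commutative union bound:
`Tr[Π_k ⋯ Π₁ ρ Π₁† ⋯ Π_k†] ≥ Tr[ρ] − 2√(Σ_i Tr[(I − Π_i)ρ])`. -/
theorem sen_noncommutative_union_bound {n : Type*} [Fintype n] [DecidableEq n]
    (ρ : Matrix n n ℂ) (hρ : ρ.PosSemidef) (htr : ρ.trace.re ≤ 1)
    (k : ℕ) (Pj : Fin k → Matrix n n ℂ)
    (hherm : ∀ i, (Pj i)ᴴ = Pj i) (hproj : ∀ i, Pj i * Pj i = Pj i) :
    ρ.trace.re - 2 * Real.sqrt (∑ i, (((1 - Pj i) * ρ).trace).re)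
      ≤ (((List.ofFn Pj).reverse.prod) * ρ * ((List.ofFn Pj).reverse.prod)ᴴ).trace.re := by
  set S : Matrix n n ℂ := open scoped MatrixOrder in CFC.sqrt ρ with hSdef
  have hS : S * S = ρ := open scoped MatrixOrder in CFC.sqrt_mul_sqrt_self ρ hρ.nonneg
  have hSh : Sᴴ = S := open scoped MatrixOrder in (CFC.sqrt_nonneg ρ).isSelfAdjoint
  set L : List (Matrix n n ℂ) := (List.ofFn Pj).reverse with hLdef
  have hL : ∀ Q ∈ L, Qᴴ = Q ∧ Q * Q = Q := by
    intro Q hQ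
    rw [hLdef, List.mem_reverse, List.mem_ofFn] at hQ
    obtain ⟨i, rfl⟩ := hQ
    exact ⟨hherm i, hproj i⟩
  set P := L.prod with hPdef
  set a := ‖e S‖ with ha
  set b := ‖e (P * S)‖ with hb
  set c := ∑ i, (((1 - Pj i) * ρ).trace).re with hc
  -- a² = Tr ρ
  have f1 : a ^ 2 = ρ.trace.re := by rw [ha, nsq, hSh, hS]
  -- each summand of c
  have f2 : ∀ Q : Matrix n n ℂ, Qᴴ = Q → Q * Q = Q →
      (((1 - Q) * ρ).trace).re = ‖e ((1 - Q) * S)‖ ^ 2 := by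
    intro Q hq hq2
    rw [nsq]
    have h2 : (1 - Q) * (1 - Q) = 1 - Q := by simp [sub_mul, mul_sub, hq2]
    have : ((1 - Q) * S)ᴴ * ((1 - Q) * S) = S * ((1 - Q) * S) := by
      rw [Matrix.conjTranspose_mul, Matrix.conjTranspose_sub, Matrix.conjTranspose_one, hq, hSh]
      rw [mul_assoc, ← mul_assoc (1 - Q) (1 - Q) S, h2]
    rw [this]
    conv_rhs => rw [Matrix.trace_mul_comm]
    congr 2
    rw [← hS]
    noncomm_ring
  have f3 : c = (L.map (fun Q => ‖e ((1 - Q) * S)‖ ^ 2)).sum := by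
    rw [hLdef, List.map_reverse, List.sum_reverse, List.map_ofFn, List.sum_ofFn, hc]
    exact Finset.sum_congr rfl fun i _ => f2 (Pj i) (hherm i) (hproj i)
  -- RHS trace = b²
  have f4 : ((P * ρ * Pᴴ).trace).re = b ^ 2 := by
    rw [hb, nsq, Matrix.conjTranspose_mul, hSh]
    conv_rhs => rw [Matrix.trace_mul_comm]
    congr 2
    rw [← hS]
    noncomm_ring
  have hba : b ≤ a := prod_contract L hL S
  have hd2 : ‖e (S - P * S)‖ ^ 2 ≤ c := by rw [f3]; exact sen_key L hL S
  have hc0 : 0 ≤ c := le_trans (sq_nonneg _) hd2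
  have hd : ‖e (S - P * S)‖ ≤ Real.sqrt c := by
    rw [← Real.sqrt_sq (norm_nonneg (e (S - P * S)))]
    exact Real.sqrt_le_sqrt hd2
  have hab : a - b ≤ ‖e (S - P * S)‖ := by
    rw [e_sub]
    exact (norm_sub_norm_le _ _)
  have ha1 : a ≤ 1 := by nlinarith [norm_nonneg (e S)]
  have hb0 : 0 ≤ b := norm_nonneg _
  have hsc : 0 ≤ Real.sqrt c := Real.sqrt_nonneg _
  rw [f4, ← f1]
  nlinarith [hab.trans hd]
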